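/- Let m ≥ 0, β ≥ 0, δ̃ ≥ 0, and z ∈ Q. Let ψ : E → ℝ be convex and m-strongly convex relative to d on Q, and let y ∈ Q be a δ̃-approximate minimizer of the function x ↦ ψ(x) + β·V[z](x) on Q. Then for all x ∈ Q: ψ(x) + β·V[z](x) ≥ ψ(y) + β·V[z](y) + (β + m)·V[y](x) − δ̃. -/

import Mathlib

open RealInnerProductSpace Finset

/-- The Bregman divergence `V[y](x) = d(x) - d(y) - ⟪∇d(y), x - y⟫` generated by `d`
with gradient map `Dd`. -/
noncomputable def breg {E : Type*} [NormedAddCommGroup E] [InnerProductSpace ℝ E]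
    (d : E → ℝ) (Dd : E → E) (y x : E) : ℝ :=
  d x - d y - ⟪Dd y, x - y⟫

/-- `g` is a subgradient of `ψ` at `z` (relative to the set `Q`). -/
def IsSubgradOn {E : Type*} [NormedAddCommGroup E] [InnerProductSpace ℝ E]
    (Q : Set E) (ψ : E → ℝ) (z g : E) : Prop :=
  ∀ x ∈ Q, ψ z + ⟪g, x - z⟫ ≤ ψ x

/-- `ψ` is `m`-strongly convex relative to `d` on `Q`, where `V` is the Bregman
divergence generated by `d`. -/
def StrongRelConvexOn {E : Type*} [NormedAddCommGroup E] [InnerProductSpace ℝ E]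
    (Q : Set E) (V : E → E → ℝ) (m : ℝ) (ψ : E → ℝ) : Prop :=
  ∀ z ∈ Q, ∀ g : E, IsSubgradOn Q ψ z g → ∀ x ∈ Q, ψ z + ⟪g, x - z⟫ + m * V z x ≤ ψ x

/-- `y` is a `δ`-approximate minimizer of `Ψ` on `Q`: there exists a subgradient `h`
of `Ψ` at `y` such that `⟪h, x - y⟫ ≥ -δ` for all `x ∈ Q`. -/
def IsApproxMinOn {E : Type*} [NormedAddCommGroup E] [InnerProductSpace ℝ E]
    (Q : Set E) (Ψ : E → ℝ) (δ : ℝ) (y : E) : Prop :=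
  y ∈ Q ∧ ∃ h : E, IsSubgradOn Q Ψ y h ∧ ∀ x ∈ Q, -δ ≤ ⟪h, x - y⟫

/-- Lemma 3.2: if `ψ` is convex and `m`-strongly convex relative to `d`
on `Q` and `y` is a `δ̃`-approximate minimizer of `x ↦ ψ(x) + β·V[z](x)` on `Q`, then
`ψ(x) + β·V[z](x) ≥ ψ(y) + β·V[z](y) + (β + m)·V[y](x) − δ̃` for all `x ∈ Q`. -/
theorem stmt0
    {E : Type*} [NormedAddCommGroup E] [InnerProductSpace ℝ E] [FiniteDimensional ℝ E]
    (Q : Set E) (hQ : Convex ℝ Q)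
    (d : E → ℝ) (Dd : E → E)
    (hd_conv : ConvexOn ℝ Set.univ d) (hd_diff : ∀ x, HasGradientAt d (Dd x) x)
    (m β δt : ℝ) (hm : 0 ≤ m) (hβ : 0 ≤ β) (hδt : 0 ≤ δt)
    (z : E) (hz : z ∈ Q)
    (ψ : E → ℝ) (hψ_conv : ConvexOn ℝ Q ψ)
    (hψ_strong : StrongRelConvexOn Q (breg d Dd) m ψ)
    (y : E)
    (hy : IsApproxMinOn Q (fun x => ψ x + β * breg d Dd z x) δt y) :
    ∀ x ∈ Q,
      ψ y + β * breg d Dd z y + (β + m) * breg d Dd y x - δt ≤ ψ x + β * breg d Dd z x := by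
  obtain ⟨hyQ, h, hsub, happrox⟩ := hy
  -- three-point identity
  have three : ∀ x : E, breg d Dd z x
      = breg d Dd z y + ⟪Dd y - Dd z, x - y⟫ + breg d Dd y x := by
    intro x
    have e1 : ⟪Dd z, x - z⟫ = ⟪Dd z, x - y⟫ + ⟪Dd z, y - z⟫ := by
      rw [← inner_add_right, show x - y + (y - z) = x - z by abel]
    simp only [breg, inner_sub_left]
    rw [e1]; ring
  -- g := h - β • (Dd y - Dd z) is a subgradient of ψ at y
  set g : E := h - β • (Dd y - Dd z) with hgdef
  have hginner : ∀ x : E, ⟪g, x - y⟫ = ⟪h, x - y⟫ - β * ⟪Dd y - Dd z, x - y⟫ := by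
    intro x; rw [hgdef, inner_sub_left, real_inner_smul_left]
  have hgsub : IsSubgradOn Q ψ y g := by
    intro x hx
    set v : E := x - y with hv
    -- the Bregman term along the segment, divided by t, tends to 0
    have hφ : HasDerivAt (fun t : ℝ => d (y + t • v)) ⟪Dd y, v⟫ 0 := by
      have hline : HasDerivAt (fun t : ℝ => y + t • v) v 0 := by
        simpa using ((hasDerivAt_id (0:ℝ)).smul_const v).const_add y
      have hF := HasFDerivAt.comp_hasDerivAt (x := 0)
        (by simpa using (hd_diff y).hasFDerivAt) hline
      exact hF
    have hFd : HasDerivAt (fun t : ℝ => breg d Dd y (y + t • v)) 0 0 := by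
      have : (fun t : ℝ => breg d Dd y (y + t • v))
          = fun t : ℝ => d (y + t • v) - d y - t * ⟪Dd y, v⟫ := by
        funext t; simp [breg, real_inner_smul_right]
      rw [this]
      exact ((hφ.sub_const (d y)).sub ((hasDerivAt_id (0:ℝ)).mul_const ⟪Dd y, v⟫)).congr_deriv (by simp)
    have hslope : Filter.Tendsto
        (fun t : ℝ => β * (breg d Dd y (y + t • v) / t)) (nhdsWithin 0 (Set.Ioi 0))
        (nhds 0) := by
      have h0 : breg d Dd y (y + (0:ℝ) • v) = 0 := by simp [breg]
      have := (hasDerivAt_iff_tendsto_slope.mp hFd).mono_left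
        (nhdsWithin_mono 0 (by intro t ht; exact ne_of_gt ht))
      have h2 : Filter.Tendsto (fun t : ℝ => breg d Dd y (y + t • v) / t)
          (nhdsWithin 0 (Set.Ioi 0)) (nhds 0) := by
        refine Filter.Tendsto.congr' ?_ this
        filter_upwards [self_mem_nhdsWithin] with t ht
        simp [slope_def_field, h0, breg]
      simpa using h2.const_mul β
    -- eventual inequality
    have hev : ∀ᶠ t in nhdsWithin (0:ℝ) (Set.Ioi 0),
        ψ y + ⟪g, v⟫ - ψ x ≤ β * (breg d Dd y (y + t • v) / t) := by
      filter_upwards [Ioc_mem_nhdsGT_of_mem (by norm_num : (0:ℝ) ∈ Set.Ico 0 1)]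
        with t ht
      obtain ⟨ht0, ht1⟩ := ht
      set xt : E := y + t • v with hxt
      have hxteq : xt = (1 - t) • y + t • x := by rw [hxt, hv]; module
      have hxtQ : xt ∈ Q := by
        rw [hxteq]
        exact hQ hyQ hx (by linarith : (0:ℝ) ≤ 1 - t) ht0.le (by ring)
      have h1 : ψ y + β * breg d Dd z y + ⟪h, xt - y⟫
          ≤ ψ xt + β * breg d Dd z xt := hsub xt hxtQ
      have h2 : ψ xt ≤ (1 - t) * ψ y + t * ψ x := by
        have := hψ_conv.2 hyQ hx (by linarith : (0:ℝ) ≤ 1 - t) ht0.le (by ring)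
        rw [← hxteq] at this
        simpa [smul_eq_mul] using this
      have h3 : breg d Dd z xt
          = breg d Dd z y + ⟪Dd y - Dd z, xt - y⟫ + breg d Dd y xt := three xt
      have hxy : xt - y = t • v := by rw [hxt]; abel
      have hih : ⟪h, xt - y⟫ = t * ⟪h, v⟫ := by rw [hxy, real_inner_smul_right]
      have hid : ⟪Dd y - Dd z, xt - y⟫ = t * ⟪Dd y - Dd z, v⟫ := by
        rw [hxy, real_inner_smul_right]
      have hgv : ⟪g, v⟫ = ⟪h, v⟫ - β * ⟪Dd y - Dd z, v⟫ := by
        simpa [hv] using hginner x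
      -- combine: t * (ψ y + ⟪g,v⟫ - ψ x) ≤ β * breg d Dd y xt
      have key : t * (ψ y + ⟪g, v⟫ - ψ x) ≤ β * breg d Dd y xt := by
        rw [hgv]; nlinarith [h1, h2, h3, hih, hid]
      rw [hxt] at key
      have : ψ y + ⟪g, v⟫ - ψ x ≤ β * breg d Dd y (y + t • v) / t := by
        rw [le_div_iff₀ ht0]; nlinarith [key]
      simpa [mul_div_assoc] using this
    have : ψ y + ⟪g, v⟫ - ψ x ≤ 0 :=
      ge_of_tendsto hslope hev
    linarith
  -- apply strong relative convexity with g
  intro x hx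
  have hstrong := hψ_strong y hyQ g hgsub x hx
  have h3 := three x
  have hgx := hginner x
  have happ := happrox x hx
  nlinarith [hstrong, h3, hgx, happ]
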